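/- Let G be a simple graph with maximum degree at most d, where d ≥ 2, and let S be a set of s vertices of G such that the subgraph of G induced on S is connected. Then S contains a subset W which is a 3-tree in G of size at least s/d³. -/

import Mathlib

/-- The auxiliary graph on a vertex set `W`, joining two vertices of `W` when their
distance in `G` is exactly `3`. -/
def distThreeGraph {V : Type*} (G : SimpleGraph V) (W : Finset V) :
    SimpleGraph {x // x ∈ W} :=
  SimpleGraph.fromRel (fun a b => G.dist a.1 b.1 = 3)

/-- `W` is a *3-tree* in `G`: the pairwise distances of the vertices of `W` are all at
least `3`, and the auxiliary graph joining vertices of `W` at distance exactly `3`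
is connected. -/
def IsThreeTree {V : Type*} (G : SimpleGraph V) (W : Finset V) : Prop :=
  (∀ u ∈ W, ∀ v ∈ W, u ≠ v → 3 ≤ G.edist u v) ∧ (distThreeGraph G W).Connected

open Finset SimpleGraph

section Aux

variable {V : Type*} (G : SimpleGraph V)

/-- minimum edistance from `v` to the set `W` -/
noncomputable def fW (W : Finset V) (v : V) : ℕ∞ := W.inf (fun w => G.edist v w)

lemma fW_le {W : Finset V} {w : V} (hw : w ∈ W) (v : V) : fW G W v ≤ G.edist v w :=
  Finset.inf_le hw

lemma fW_exists {W : Finset V} (hW : W.Nonempty) (v : V) :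
    ∃ w ∈ W, fW G W v = G.edist v w :=
  Finset.exists_mem_eq_inf W hW _

lemma fW_step {W : Finset V} (hW : W.Nonempty) {a b : V} (hab : G.Adj a b) :
    fW G W a ≤ fW G W b + 1 := by
  obtain ⟨w, hw, hwf⟩ := fW_exists G hW b
  calc fW G W a ≤ G.edist a w := fW_le G hw a
    _ ≤ G.edist a b + G.edist b w := SimpleGraph.edist_triangle
    _ ≤ 1 + G.edist b w := by
        gcongr
        exact (SimpleGraph.edist_eq_one_iff_adj.mpr hab).le
    _ = fW G W b + 1 := by rw [hwf, add_comm]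

lemma fW_ivt {W : Finset V} (hW : W.Nonempty) {u v : V} (p : G.Walk u v) :
    fW G W v = 0 → 3 ≤ fW G W u → ∃ x ∈ p.support, fW G W x = 3 := by
  induction p with
  | nil =>
    intro h0 h3
    rw [h0] at h3
    exact absurd h3 (by decide)
  | @cons a b c hab q ih =>
    intro h0 h3
    by_cases hx : fW G W a = 3
    · exact ⟨a, by simp, hx⟩
    · have hlt : (3 : ℕ∞) < fW G W a := lt_of_le_of_ne h3 (Ne.symm hx)
      have h4 : (3 : ℕ∞) + 1 ≤ fW G W a := (ENat.add_one_le_iff (by decide)).mpr hlt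
      have h3b : (3 : ℕ∞) ≤ fW G W b := by
        have hstep := fW_step G hW hab
        have h4' : (3 : ℕ∞) + 1 ≤ fW G W b + 1 := le_trans h4 hstep
        exact (WithTop.add_le_add_iff_right WithTop.one_ne_top).mp h4'
      obtain ⟨x, hxs, hx3⟩ := ih h0 h3b
      exact ⟨x, by simp [hxs], hx3⟩

lemma singleton_isThreeTree (v : V) : IsThreeTree G {v} := by
  constructor
  · intro u hu w hw huw
    simp only [Finset.mem_singleton] at hu hw
    exact absurd (hu.trans hw.symm) huw
  · rw [SimpleGraph.connected_iff]
    refine ⟨?_, ⟨⟨v, Finset.mem_singleton_self v⟩⟩⟩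
    intro a b
    have : a = b := by
      ext
      have ha := a.2; have hb := b.2
      simp only [Finset.mem_singleton] at ha hb
      rw [ha, hb]
    rw [this]

lemma extend_isThreeTree [DecidableEq V] {W : Finset V} (hW : IsThreeTree G W) {x : V}
    (hmin : ∀ w ∈ W, 3 ≤ G.edist x w) {w0 : V} (hw0 : w0 ∈ W)
    (hx3 : G.edist x w0 = 3) : IsThreeTree G (insert x W) := by
  have hxW : x ∉ W := by
    intro h
    have := hmin x h
    rw [SimpleGraph.edist_self] at this
    exact absurd this (by decide)
  have hdist : G.dist x w0 = 3 := by
    have : G.dist x w0 = (G.edist x w0).toNat := rfl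
    rw [this, hx3]; rfl
  constructor
  · intro u hu v hv huv
    rcases Finset.mem_insert.mp hu with hux | hu
    · rcases Finset.mem_insert.mp hv with hvx | hv
      · exact absurd (hux.trans hvx.symm) huv
      · rw [hux]; exact hmin v hv
    · rcases Finset.mem_insert.mp hv with hvx | hv
      · rw [hvx, SimpleGraph.edist_comm]; exact hmin u hu
      · exact hW.1 u hu v hv huv
  · -- connectivity
    have hxne : x ≠ w0 := by rintro rfl; exact hxW hw0
    let xI : {y // y ∈ insert x W} := ⟨x, Finset.mem_insert_self x W⟩
    let φ : distThreeGraph G W →g distThreeGraph G (insert x W) :=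
      { toFun := fun a => ⟨a.1, Finset.mem_insert_of_mem a.2⟩
        map_rel' := by
          intro a b hab
          rw [distThreeGraph, SimpleGraph.fromRel_adj] at hab ⊢
          refine ⟨?_, hab.2⟩
          intro h
          apply hab.1
          have h' : a.1 = b.1 := congrArg (Subtype.val : {y // y ∈ insert x W} → V) h
          exact Subtype.ext h' }
    have hadj : (distThreeGraph G (insert x W)).Adj ⟨w0, Finset.mem_insert_of_mem hw0⟩ xI := by
      rw [distThreeGraph, SimpleGraph.fromRel_adj]
      exact ⟨by simp [xI, Ne.symm hxne], Or.inr hdist⟩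
    have key : ∀ a : {y // y ∈ insert x W}, (distThreeGraph G (insert x W)).Reachable a xI := by
      intro a
      rcases Finset.mem_insert.mp a.2 with h | h
      · have : a = xI := Subtype.ext h
        rw [this]
      · have hr := hW.2.preconnected ⟨a.1, h⟩ ⟨w0, hw0⟩
        have hr' := hr.map φ
        have hφa : φ ⟨a.1, h⟩ = a := Subtype.ext rfl
        have hφw : φ ⟨w0, hw0⟩ = ⟨w0, Finset.mem_insert_of_mem hw0⟩ := rfl
        rw [hφa, hφw] at hr'
        exact hr'.trans hadj.reachable
    rw [SimpleGraph.connected_iff]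
    exact ⟨fun a b => (key a).trans (key b).symm, ⟨xI⟩⟩

lemma ball2_card [Fintype V] [DecidableRel G.Adj] {d : ℕ} (hdeg : ∀ v, G.degree v ≤ d)
    (w : V) :
    (Finset.univ.filter (fun v => G.edist w v ≤ 2)).card ≤ 1 + d + d * d := by
  classical
  have hsub : Finset.univ.filter (fun v => G.edist w v ≤ 2) ⊆
      insert w (G.neighborFinset w ∪
        (G.neighborFinset w).biUnion (fun y => G.neighborFinset y)) := by
    intro v hv
    simp only [Finset.mem_filter, Finset.mem_univ, true_and] at hv
    have htop : G.edist w v ≠ ⊤ := by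
      intro h; rw [h] at hv; exact absurd hv (by decide)
    obtain ⟨p, hp⟩ := SimpleGraph.exists_walk_of_edist_ne_top htop
    have hl : p.length ≤ 2 := by
      have : (p.length : ℕ∞) ≤ 2 := by rw [hp]; exact hv
      exact_mod_cast this
    cases p with
    | nil => exact Finset.mem_insert_self _ _
    | @cons _ y _ h q =>
      cases q with
      | nil =>
        apply Finset.mem_insert_of_mem
        apply Finset.mem_union_left
        rwa [SimpleGraph.mem_neighborFinset]
      | @cons _ z _ h' q' =>
        cases q' with
        | nil =>
          apply Finset.mem_insert_of_mem
          apply Finset.mem_union_right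
          rw [Finset.mem_biUnion]
          exact ⟨y, by rwa [SimpleGraph.mem_neighborFinset],
            by rwa [SimpleGraph.mem_neighborFinset]⟩
        | cons h'' q'' => simp [SimpleGraph.Walk.length_cons] at hl
  calc (Finset.univ.filter (fun v => G.edist w v ≤ 2)).card
      ≤ (insert w (G.neighborFinset w ∪
          (G.neighborFinset w).biUnion (fun y => G.neighborFinset y))).card :=
        Finset.card_le_card hsub
    _ ≤ 1 + (G.neighborFinset w ∪
          (G.neighborFinset w).biUnion (fun y => G.neighborFinset y)).card := by
        rw [add_comm]; exact Finset.card_insert_le _ _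
    _ ≤ 1 + ((G.neighborFinset w).card +
          ((G.neighborFinset w).biUnion (fun y => G.neighborFinset y)).card) := by
        gcongr; exact Finset.card_union_le _ _
    _ ≤ 1 + (d + d * d) := by
        gcongr
        · exact hdeg w
        · calc ((G.neighborFinset w).biUnion (fun y => G.neighborFinset y)).card
              ≤ ∑ y ∈ G.neighborFinset w, (G.neighborFinset y).card :=
              Finset.card_biUnion_le
            _ ≤ ∑ _y ∈ G.neighborFinset w, d := Finset.sum_le_sum (fun y _ => hdeg y)
            _ = (G.neighborFinset w).card * d := by rw [Finset.sum_const, smul_eq_mul]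
            _ ≤ d * d := by
                have := hdeg w
                rw [SimpleGraph.degree] at this
                exact Nat.mul_le_mul_right d this
    _ = 1 + d + d * d := by ring

end Aux

/-- In a simple graph of maximum degree at most `d ≥ 2`, any set `S` of `s` vertices
inducing a connected subgraph contains a 3-tree of size at least `s/d³`. -/
theorem connected_contains_large_threeTree {V : Type*} [Fintype V] (G : SimpleGraph V)
    [DecidableRel G.Adj] (d : ℕ) (hd : 2 ≤ d) (hdeg : ∀ v, G.degree v ≤ d)
    (S : Finset V) (s : ℕ) (hs : S.card = s) (hconn : (G.induce (S : Set V)).Connected) :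
    ∃ W ⊆ S, IsThreeTree G W ∧ (s : ℝ) / (d : ℝ) ^ 3 ≤ (W.card : ℝ) := by
  classical
  obtain ⟨v0, hv0⟩ : S.Nonempty := by
    obtain ⟨⟨v, hv⟩⟩ := hconn.nonempty
    exact ⟨v, hv⟩
  -- the family of 3-trees contained in S
  set T : Finset (Finset V) :=
    S.powerset.filter (fun W => W.Nonempty ∧ IsThreeTree G W) with hT
  have hTne : T.Nonempty := by
    refine ⟨{v0}, ?_⟩
    rw [hT, Finset.mem_filter, Finset.mem_powerset]
    exact ⟨Finset.singleton_subset_iff.mpr hv0, Finset.singleton_nonempty v0,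
      singleton_isThreeTree G v0⟩
  obtain ⟨W, hWT, hWmax⟩ := Finset.exists_max_image T Finset.card hTne
  rw [hT, Finset.mem_filter, Finset.mem_powerset] at hWT
  obtain ⟨hWS, hWne, hWtree⟩ := hWT
  refine ⟨W, hWS, hWtree, ?_⟩
  -- every vertex of S is within edistance 2 of W
  have hcover : ∀ v ∈ S, fW G W v ≤ 2 := by
    intro v hvS
    by_contra hv2
    have h3 : (3 : ℕ∞) ≤ fW G W v := by
      have hlt : (2 : ℕ∞) < fW G W v := not_le.mp hv2
      have := Order.add_one_le_of_lt hlt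
      rw [show (2 : ℕ∞) + 1 = 3 by norm_num] at this
      exact this
    obtain ⟨w0, hw0⟩ := hWne
    have hw0S : w0 ∈ S := hWS hw0
    obtain ⟨pI⟩ := hconn ⟨v, by simpa using hvS⟩ ⟨w0, by simpa using hw0S⟩
    let p : G.Walk v w0 := pI.map (SimpleGraph.Embedding.induce (S : Set V)).toHom
    have hsupp : ∀ x ∈ p.support, x ∈ S := by
      intro x hx
      change x ∈ (pI.map (SimpleGraph.Embedding.induce (S : Set V)).toHom).support at hx
      rw [SimpleGraph.Walk.support_map, List.mem_map] at hx
      obtain ⟨⟨y, hy⟩, _, rfl⟩ := hx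
      simpa using hy
    have h0 : fW G W w0 = 0 := by
      have h1 : fW G W w0 ≤ G.edist w0 w0 := fW_le G hw0 w0
      rw [SimpleGraph.edist_self] at h1
      exact le_antisymm h1 zero_le
    obtain ⟨x, hxp, hx3⟩ := fW_ivt G ⟨w0, hw0⟩ p h0 h3
    have hxS : x ∈ S := hsupp x hxp
    have hmin : ∀ w ∈ W, 3 ≤ G.edist x w := by
      intro w hw
      calc (3 : ℕ∞) = fW G W x := hx3.symm
        _ ≤ G.edist x w := fW_le G hw x
    obtain ⟨w1, hw1, hw1eq⟩ := fW_exists G ⟨w0, hw0⟩ x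
    have hx3' : G.edist x w1 = 3 := by rw [← hw1eq, hx3]
    have hxW : x ∉ W := by
      intro h
      have := hmin x h
      rw [SimpleGraph.edist_self] at this
      exact absurd this (by decide)
    have hbig : insert x W ∈ T := by
      rw [hT, Finset.mem_filter, Finset.mem_powerset]
      exact ⟨Finset.insert_subset hxS hWS, Finset.insert_nonempty x W,
        extend_isThreeTree G hWtree hmin hw1 hx3'⟩
    have := hWmax _ hbig
    rw [Finset.card_insert_of_notMem hxW] at this
    omega
  -- counting
  have hScover : S ⊆ W.biUnion (fun w => Finset.univ.filter (fun v => G.edist w v ≤ 2)) := by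
    intro v hvS
    rw [Finset.mem_biUnion]
    obtain ⟨w, hw, hweq⟩ := fW_exists G hWne v
    refine ⟨w, hw, ?_⟩
    simp only [Finset.mem_filter, Finset.mem_univ, true_and]
    rw [SimpleGraph.edist_comm, ← hweq]
    exact hcover v hvS
  have hcard : s ≤ W.card * d ^ 3 := by
    have h1 : s ≤ W.card * (1 + d + d * d) := by
      calc s = S.card := hs.symm
        _ ≤ (W.biUnion (fun w => Finset.univ.filter (fun v => G.edist w v ≤ 2))).card :=
          Finset.card_le_card hScover
        _ ≤ ∑ w ∈ W, (Finset.univ.filter (fun v => G.edist w v ≤ 2)).card :=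
          Finset.card_biUnion_le
        _ ≤ ∑ _w ∈ W, (1 + d + d * d) := Finset.sum_le_sum (fun w _ => ball2_card G hdeg w)
        _ = W.card * (1 + d + d * d) := by rw [Finset.sum_const, smul_eq_mul]
    have h2 : 1 + d + d * d ≤ d ^ 3 := by nlinarith
    calc s ≤ W.card * (1 + d + d * d) := h1
      _ ≤ W.card * d ^ 3 := Nat.mul_le_mul_left _ h2
  have hd0 : (0 : ℝ) < (d : ℝ) ^ 3 := by positivity
  rw [div_le_iff₀ hd0]
  calc (s : ℝ) ≤ ((W.card * d ^ 3 : ℕ) : ℝ) := by exact_mod_cast hcard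
    _ = (W.card : ℝ) * (d : ℝ) ^ 3 := by push_cast; ring
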